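/- Let 𝒳 = {X(t)}_{t≥0} be a right-continuous filtration of a finite simplicial complex with all k-th persistent homology birth times equal to 0, and let φ : [0,∞) → [0,∞) be a right-continuous nondecreasing function with φ(0) = 0. Then Σ_{i=1}^{p+q} φ(d_i−) = ∫_{[0,∞)} β_k(X(t)) dφ(t), where d_1,…,d_{p+q} are the death times (possibly ∞), φ(t−) denotes the left limit, and the integral is the Lebesgue–Stieltjes integral against dφ. -/

import Mathlib

open scoped BigOperators

/-- An abstract simplicial complex on the vertex set `Fin n`, given as the finite set of its
(nonempty) simplices. -/
def IsComplex {n : ℕ} (X : Finset (Finset (Fin n))) : Prop :=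
  (∀ s ∈ X, s ≠ ∅) ∧ ∀ s ∈ X, ∀ t, t ⊆ s → t ≠ ∅ → t ∈ X

/-- The simplices of cardinality `j` of `X`, where the empty simplex (cardinality `0`,
dimension `-1`) is always present (augmented convention).  Thus `faces X (k+1)` is the set of
`k`-dimensional simplices, and `(faces X 0).card = 1` plays the role of `f₋₁ = 1`. -/
def faces {n : ℕ} (X : Finset (Finset (Fin n))) (j : ℕ) : Finset (Finset (Fin n)) :=
  (insert (∅ : Finset (Fin n)) X).filter (fun s => s.card = j)

/-- The matrix of the boundary map from chains on simplices of cardinality `j+1` to chains on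
simplices of cardinality `j`, with the usual alternating signs (each simplex is oriented by the
increasing order of its vertices).  For `j = 0` this is the augmentation map `⟨v⟩ ↦ 1`. -/
noncomputable def bdryMat {n : ℕ} (X : Finset (Finset (Fin n))) (j : ℕ) :
    Matrix ↥(faces X j) ↥(faces X (j + 1)) ℝ := fun t s =>
  if t.1 ⊆ s.1 then
    (-1 : ℝ) ^ ((s.1 \ t.1).sum fun v => (s.1.filter fun w => w < v).card)
  else 0

/-- The boundary map (in "cardinality" grading) `∂ : C_{j}(X) → C_{j-1}(X)`, augmented. -/
noncomputable def bdry {n : ℕ} (X : Finset (Finset (Fin n))) (j : ℕ) :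
    (↥(faces X (j + 1)) → ℝ) →ₗ[ℝ] (↥(faces X j) → ℝ) :=
  (bdryMat X j).mulVecLin

/-- The `k`-th reduced Betti number of `X` over `ℝ`:
`dim ker ∂_k - dim im ∂_{k+1}` (with the augmented chain complex). -/
noncomputable def betti {n : ℕ} (X : Finset (Finset (Fin n))) (k : ℕ) : ℕ :=
  Module.finrank ℝ (LinearMap.ker (bdry X k)) -
    Module.finrank ℝ (LinearMap.range (bdry X (k + 1)))

open scoped ENNReal

/-- The left limit `φ(x−)` of a nondecreasing function `φ` (vanishing on `(-∞, 0]`) at an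
extended real point `x`, as a value in `ℝ≥0∞`: `sup {φ(t) : 0 ≤ t, t < x}` (so `φ(∞−)` is the
limit of `φ` at `+∞`, and `φ(0−) = 0`). -/
noncomputable def leftLimE (φ : StieltjesFunction ℝ) (x : ℝ≥0∞) : ℝ≥0∞ :=
  ⨆ (t : ℝ) (_ : 0 ≤ t ∧ ENNReal.ofReal t < x), ENNReal.ofReal (φ t)


open MeasureTheory Set Filter Topology in
private lemma statement12_leftLim0 (φ : StieltjesFunction ℝ) (hφ0 : ∀ t : ℝ, t ≤ 0 → φ t = 0) :
    Function.leftLim φ 0 = 0 := by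
  apply leftLim_eq_of_tendsto
  apply Tendsto.congr' _ tendsto_const_nhds
  filter_upwards [self_mem_nhdsWithin] with t ht
  exact (hφ0 t ht.le).symm

open MeasureTheory Set Filter Topology in
private lemma statement12_key (φ : StieltjesFunction ℝ) (hφ0 : ∀ t : ℝ, t ≤ 0 → φ t = 0)
    (x : ℝ≥0∞) (hx : 0 < x) :
    φ.measure {t : ℝ | 0 ≤ t ∧ ENNReal.ofReal t < x} = leftLimE φ x := by
  have hl0 : Function.leftLim φ 0 = 0 := statement12_leftLim0 φ hφ0
  rcases eq_or_ne x ⊤ with rfl | hxt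
  · have hset : {t : ℝ | 0 ≤ t ∧ ENNReal.ofReal t < ⊤} = Ici 0 := by
      ext t; simp [ENNReal.ofReal_lt_top]
    rw [hset]
    have h1 : φ.measure (Ici 0) = ⨆ b : ℝ, φ.measure (Ico 0 b) := by
      refine tendsto_nhds_unique (tendsto_measure_Ico_atTop _ _) (tendsto_atTop_iSup ?_)
      intro a b hab
      exact measure_mono (Ico_subset_Ico le_rfl hab)
    rw [h1]
    simp_rw [StieltjesFunction.measure_Ico, hl0, sub_zero]
    unfold leftLimE
    apply le_antisymm
    · refine iSup_le fun b => ?_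
      have h2 : Function.leftLim φ b ≤ φ (max b 0) :=
        le_trans (φ.mono.leftLim_le le_rfl) (φ.mono (le_max_left _ _))
      refine le_trans (ENNReal.ofReal_le_ofReal h2) ?_
      exact le_iSup₂ (f := fun t _ => ENNReal.ofReal (φ t)) (max b 0)
        ⟨le_max_right _ _, ENNReal.ofReal_lt_top⟩
    · refine iSup₂_le fun t ht => ?_
      refine le_trans (ENNReal.ofReal_le_ofReal (φ.mono.le_leftLim (lt_add_one t))) ?_
      exact le_iSup (fun b => ENNReal.ofReal (Function.leftLim φ b)) (t + 1)
  · set s := x.toReal with hs_def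
    have hs : 0 < s := ENNReal.toReal_pos hx.ne' hxt
    have hiff : ∀ t : ℝ, 0 ≤ t → (ENNReal.ofReal t < x ↔ t < s) := fun t ht =>
      ENNReal.ofReal_lt_iff_lt_toReal ht hxt
    have hset : {t : ℝ | 0 ≤ t ∧ ENNReal.ofReal t < x} = Ico 0 s := by
      ext t
      simp only [mem_setOf_eq, mem_Ico]
      exact and_congr_right fun ht => hiff t ht
    rw [hset, StieltjesFunction.measure_Ico, hl0, sub_zero]
    unfold leftLimE
    have hcond : ∀ t : ℝ, (0 ≤ t ∧ ENNReal.ofReal t < x) ↔ (0 ≤ t ∧ t < s) := fun t =>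
      and_congr_right fun ht => hiff t ht
    apply le_antisymm
    · have h3 : Tendsto (fun t => ENNReal.ofReal (φ t)) (𝓝[<] s)
          (𝓝 (ENNReal.ofReal (Function.leftLim φ s))) :=
        (ENNReal.continuous_ofReal.tendsto _).comp (φ.mono.tendsto_leftLim s)
      refine le_of_tendsto h3 ?_
      filter_upwards [Ioo_mem_nhdsLT_of_mem (⟨hs, le_rfl⟩ : s ∈ Ioc 0 s)] with t ht
      exact le_iSup₂ (f := fun t _ => ENNReal.ofReal (φ t)) t
        ⟨ht.1.le, (hiff t ht.1.le).2 ht.2⟩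
    · refine iSup₂_le fun t ht => ?_
      exact ENNReal.ofReal_le_ofReal (φ.mono.le_leftLim ((hcond t).1 ht).2)


/-- Let `𝒳 = {X(t)}_{t ≥ 0}` be a right-continuous filtration of a finite
simplicial complex whose `k`-th persistent homology bars all have birth time `0` and death
times `d_1, …, d_m` (possibly `∞`), i.e. for `t ≥ 0` the `k`-th reduced Betti number of `X(t)`
is the number of `i` with `t < d_i`.  Let `φ` be a right-continuous nondecreasing function with
`φ(t) = 0` for `t ≤ 0` (in particular `φ(0) = 0` and `φ ≥ 0`).  Then
`Σ_{i=1}^{m} φ(d_i−) = ∫_{[0,∞)} β_k(X(t)) dφ(t)` (Lebesgue–Stieltjes integral). -/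
theorem statement12 {n : ℕ} (k : ℕ) (X : ℝ → Finset (Finset (Fin n)))
    (hcplx : ∀ t, IsComplex (X t))
    (hmono : ∀ s t : ℝ, s ≤ t → X s ⊆ X t)
    (hrc : ∀ t : ℝ, ∃ ε > 0, ∀ s, t ≤ s → s < t + ε → X s = X t)
    (m : ℕ) (d : Fin m → ℝ≥0∞) (hd : ∀ i, 0 < d i)
    (hbars : ∀ t : ℝ, 0 ≤ t →
      (betti (X t) k : ℕ)
        = (Finset.univ.filter fun i : Fin m => ENNReal.ofReal t < d i).card)
    (φ : StieltjesFunction ℝ) (hφ0 : ∀ t : ℝ, t ≤ 0 → φ t = 0) :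
    ∑ i : Fin m, leftLimE φ (d i)
      = ∫⁻ t in Set.Ici (0 : ℝ), (betti (X t) k : ℝ≥0∞) ∂φ.measure := by
  
  classical
  have hSmeas : ∀ i : Fin m, MeasurableSet {u : ℝ | ENNReal.ofReal u < d i} := fun i =>
    measurableSet_lt ENNReal.measurable_ofReal measurable_const
  have hstep : ∫⁻ t in Set.Ici (0:ℝ), (betti (X t) k : ℝ≥0∞) ∂φ.measure
      = ∫⁻ t in Set.Ici (0:ℝ), ∑ i : Fin m,
          Set.indicator {u : ℝ | ENNReal.ofReal u < d i} (fun _ => 1) t ∂φ.measure := by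
    refine MeasureTheory.setLIntegral_congr_fun measurableSet_Ici
      (fun t ht => ?_)
    rw [hbars t ht, Finset.card_filter]
    push_cast
    refine Finset.sum_congr rfl fun i _ => ?_
    rw [Set.indicator_apply]
    simp [Set.mem_setOf_eq]
  rw [hstep, MeasureTheory.lintegral_finset_sum _ fun i _ =>
    measurable_const.indicator (hSmeas i)]
  refine Finset.sum_congr rfl fun i _ => ?_
  rw [MeasureTheory.lintegral_indicator_const (hSmeas i) 1, one_mul,
    MeasureTheory.Measure.restrict_apply (hSmeas i)]
  rw [show {u : ℝ | ENNReal.ofReal u < d i} ∩ Set.Ici 0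
      = {t : ℝ | 0 ≤ t ∧ ENNReal.ofReal t < d i} by ext u; simp [and_comm]]
  exact (statement12_key φ hφ0 (d i) (hd i)).symm
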